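/- arXiv:1912.11049 — 4 statements merged into one kernel-verified Lean document; each statement's English description precedes it below -/
import Mathlib

section
/- A linear CPTP map E on operators of ℂ^{D_A} ⊗ ℂ^{D_B} is QI-preserving (i.e., maps every QI state to a QI state) if and only if for every a,b ∈ {0,…,D_A−1} and every j ∈ {0,…,D_B−1}, the state E(ρ_{a,b} ⊗ |j⟩⟨j|) is a QI state. -/
open Matrix Finset
open scoped Kronecker ComplexOrder

/-- A density operator: positive semidefinite with unit trace. -/
def IsDensity {n : Type*} [Fintype n] (ρ : Matrix n n ℂ) : Prop :=
  ρ.PosSemidef ∧ ρ.trace = 1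

/-- A quantum-incoherent (QI) state on a bipartite system with quantum part `Q`
and incoherent part `B` (with its fixed reference basis): a state of the form
`∑ j, p j • ρ j ⊗ |j⟩⟨j|`. -/
def IsQI {Q B : Type*} [Fintype Q] [Fintype B] [DecidableEq B]
    (σ : Matrix (Q × B) (Q × B) ℂ) : Prop :=
  ∃ (p : B → ℝ) (ρ : B → Matrix Q Q ℂ),
    (∀ j, 0 ≤ p j) ∧ (∑ j, p j = 1) ∧ (∀ j, IsDensity (ρ j)) ∧
    σ = ∑ j, (p j : ℂ) • (ρ j ⊗ₖ Matrix.single j j 1)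

/-- An incoherent state: a density operator diagonal in the reference basis. -/
def IsIncoherent {n : Type*} [Fintype n] (σ : Matrix n n ℂ) : Prop :=
  IsDensity σ ∧ ∀ x y, x ≠ y → σ x y = 0

/-- The extension `id_k ⊗ E` of a linear map on matrices. -/
def tensId {n m : Type*} (k : Type*)
    (E : Matrix n n ℂ →ₗ[ℂ] Matrix m m ℂ) :
    Matrix (k × n) (k × n) ℂ →ₗ[ℂ] Matrix (k × m) (k × m) ℂ where
  toFun X := Matrix.of fun p q => E (Matrix.of fun a b => X (p.1, a) (q.1, b)) p.2 q.2
  map_add' X Y := by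
    ext p q
    show E (Matrix.of fun a b => (X + Y) (p.1, a) (q.1, b)) p.2 q.2 = _
    rw [show (Matrix.of fun a b => (X + Y) (p.1, a) (q.1, b)) =
        (Matrix.of fun a b => X (p.1, a) (q.1, b)) +
        (Matrix.of fun a b => Y (p.1, a) (q.1, b)) from rfl, map_add]
    rfl
  map_smul' c X := by
    ext p q
    show E (Matrix.of fun a b => (c • X) (p.1, a) (q.1, b)) p.2 q.2 = _
    rw [show (Matrix.of fun a b => (c • X) (p.1, a) (q.1, b)) =
        c • (Matrix.of fun a b => X (p.1, a) (q.1, b)) from rfl, _root_.map_smul]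
    rfl

/-- Complete positivity: `id_k ⊗ E` preserves positive semidefiniteness for all `k`. -/
def IsCompletelyPositive {n m : Type*} [Fintype n] [Fintype m]
    (E : Matrix n n ℂ →ₗ[ℂ] Matrix m m ℂ) : Prop :=
  ∀ (k : ℕ) (X : Matrix (Fin k × n) (Fin k × n) ℂ), X.PosSemidef →
    ((tensId (Fin k) E) X).PosSemidef

/-- A completely positive trace-preserving (CPTP) linear map. -/
def IsCPTP {n m : Type*} [Fintype n] [Fintype m]
    (E : Matrix n n ℂ →ₗ[ℂ] Matrix m m ℂ) : Prop :=
  IsCompletelyPositive E ∧ ∀ X, (E X).trace = X.trace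

/-- The basis density operators `ρ_{a,b}` built from the reference basis. -/
noncomputable def rhoBasis (D : ℕ) (a b : Fin D) : Matrix (Fin D) (Fin D) ℂ :=
  if a = b then Matrix.single a a 1
  else if (a : ℕ) < b then
    (1 / 2 : ℂ) • (Matrix.single a a 1 + Matrix.single a b 1 +
      Matrix.single b a 1 + Matrix.single b b 1)
  else
    (1 / 2 : ℂ) • (Matrix.single a a 1 + (-Complex.I) • Matrix.single a b 1 +
      Complex.I • Matrix.single b a 1 + Matrix.single b b 1)


/-- rank one matrix is PSD -/
lemma vecMulVec_star_posSemidef {n : Type*} [Fintype n] (v : n → ℂ) :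
    (Matrix.vecMulVec v (star v)).PosSemidef := by
  refine Matrix.PosSemidef.of_dotProduct_mulVec_nonneg ?_ ?_
  · ext i j
    simp [Matrix.vecMulVec, Matrix.conjTranspose_apply, mul_comm]
  · intro x
    have : dotProduct (star x) ((Matrix.vecMulVec v (star v)) *ᵥ x) =
        star (dotProduct (star v) x) * (dotProduct (star v) x) := by
      simp only [dotProduct, Matrix.mulVec, Matrix.vecMulVec, Matrix.of_apply, Pi.star_apply]
      simp only [star_sum, star_mul', star_star, Finset.mul_sum, Finset.sum_mul]
      rw [Finset.sum_comm]
      congr 1; ext i; congr 1; ext j; ring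
    rw [this]
    exact star_mul_self_nonneg _

lemma posSemidef_smul_real {n : Type*} [Fintype n] {M : Matrix n n ℂ}
    (hM : M.PosSemidef) {c : ℝ} (hc : 0 ≤ c) : ((c : ℂ) • M).PosSemidef := by
  refine Matrix.PosSemidef.of_dotProduct_mulVec_nonneg ?_ ?_
  · ext i j
    simp only [Matrix.conjTranspose_apply, Matrix.smul_apply, star_smul, Complex.star_def,
      Complex.conj_ofReal, _root_.map_mul, ← hM.1.apply i j, Matrix.conjTranspose_apply, smul_eq_mul]
  · intro x
    have : dotProduct (star x) (((c : ℂ) • M) *ᵥ x) =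
        (c : ℂ) * dotProduct (star x) (M *ᵥ x) := by
      simp only [dotProduct, Matrix.mulVec, Matrix.smul_apply, smul_eq_mul, Finset.mul_sum]
      congr 1; ext i; congr 1; ext j; ring
    rw [this]
    exact mul_nonneg (by exact_mod_cast Complex.zero_le_real.mpr hc) (hM.dotProduct_mulVec_nonneg x)

open scoped MatrixOrder in
lemma psd_eq_conjTranspose_mul_self {n : Type*} [Fintype n] {M : Matrix n n ℂ}
    (hM : M.PosSemidef) : ∃ B : Matrix n n ℂ, M = Bᴴ * B := by
  classical
  obtain ⟨X, hX, -, hXM⟩ := CFC.exists_sqrt_of_isSelfAdjoint_of_quasispectrumRestricts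
    hM.isHermitian (QuasispectrumRestricts.nnreal_of_nonneg hM.nonneg)
  refine ⟨X, ?_⟩
  rw [← hXM]
  congr 1
  exact hX.star_eq.symm

lemma psd_trace_zero_eq_zero {n : Type*} [Fintype n] [DecidableEq n] {M : Matrix n n ℂ}
    (hM : M.PosSemidef) (h : M.trace = 0) : M = 0 := by
  obtain ⟨B, rfl⟩ := psd_eq_conjTranspose_mul_self hM
  rw [Matrix.conjTranspose_mul_self_eq_zero]
  rw [Matrix.trace] at h
  have h' : ∑ j, ∑ i, star (B i j) * B i j = 0 := by
    rw [← h]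
    refine Finset.sum_congr rfl fun j _ => ?_
    simp [Matrix.diag, Matrix.mul_apply, Matrix.conjTranspose_apply]
  have := (Finset.sum_eq_zero_iff_of_nonneg (fun j _ =>
      Finset.sum_nonneg fun i _ => star_mul_self_nonneg (B i j))).mp h'
  ext i j
  have h2 := (Finset.sum_eq_zero_iff_of_nonneg (fun i _ =>
      star_mul_self_nonneg (B i j))).mp (this j (Finset.mem_univ j)) i (Finset.mem_univ i)
  have : Complex.normSq (B i j) = 0 := by
    have := h2
    rw [Complex.star_def, mul_comm, Complex.mul_conj] at this
    exact_mod_cast this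
  simpa using Complex.normSq_eq_zero.mp this

lemma rhoBasis_isDensity (D : ℕ) (a b : Fin D) : IsDensity (rhoBasis D a b) := by
  constructor
  · unfold rhoBasis
    split_ifs with h1 h2
    · have : Matrix.single a a (1:ℂ) =
          Matrix.vecMulVec (Pi.single a 1) (star (Pi.single a 1)) := by
        ext i j
        simp only [Matrix.single, Matrix.vecMulVec, Matrix.of_apply, Pi.star_apply,
          Pi.single_apply, apply_ite, star_one, star_zero]
        by_cases hia : a = i <;> by_cases hja : a = j <;> simp_all [eq_comm]
      rw [this]; exact vecMulVec_star_posSemidef _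
    · have hab : a ≠ b := h1
      have : (Matrix.single a a 1 + Matrix.single a b 1 +
          Matrix.single b a 1 + Matrix.single b b (1:ℂ)) =
          Matrix.vecMulVec (Pi.single a 1 + Pi.single b 1)
            (star (Pi.single a 1 + Pi.single b 1)) := by
        ext i j
        simp only [Matrix.single, Matrix.vecMulVec, Matrix.of_apply, Matrix.add_apply,
          Pi.star_apply, Pi.add_apply, Pi.single_apply, star_add, apply_ite, star_one, star_zero]
        by_cases hia : a = i <;> by_cases hja : a = j <;> by_cases hib : b = i <;>
          by_cases hjb : b = j <;> simp_all [eq_comm] <;> ring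
      rw [show ((1:ℂ)/2) = ((1/2 : ℝ) : ℂ) by norm_num, this]
      exact posSemidef_smul_real (vecMulVec_star_posSemidef _) (by norm_num)
    · have hab : a ≠ b := h1
      have : (Matrix.single a a 1 + (-Complex.I) • Matrix.single a b 1 +
          Complex.I • Matrix.single b a 1 + Matrix.single b b (1:ℂ)) =
          Matrix.vecMulVec (Pi.single a 1 + Pi.single b Complex.I)
            (star (Pi.single a 1 + Pi.single b Complex.I)) := by
        ext i j
        simp only [Matrix.single, Matrix.vecMulVec, Matrix.of_apply, Matrix.add_apply,
          Matrix.smul_apply, Pi.star_apply, Pi.add_apply, Pi.single_apply, star_add, apply_ite,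
          star_one, star_zero, Complex.star_def, Complex.conj_I, smul_eq_mul]
        by_cases hia : a = i <;> by_cases hja : a = j <;> by_cases hib : b = i <;>
          by_cases hjb : b = j <;> simp_all [eq_comm] <;> ring
      rw [show ((1:ℂ)/2) = ((1/2 : ℝ) : ℂ) by norm_num, this]
      exact posSemidef_smul_real (vecMulVec_star_posSemidef _) (by norm_num)
  · unfold rhoBasis
    split_ifs with h1 h2
    · simp [Matrix.trace, Matrix.diag, Matrix.single, Finset.sum_ite_eq']
    all_goals {
      have hab : a ≠ b := h1
      simp only [Matrix.trace, Matrix.diag, Matrix.smul_apply, Matrix.add_apply,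
        Matrix.single, Matrix.of_apply, smul_eq_mul]
      calc ∑ x : Fin D, _ = ∑ x : Fin D,
            ((1:ℂ)/2 * (if a = x then (1:ℂ) else 0) + 1/2 * (if b = x then 1 else 0)) := by
            refine Finset.sum_congr rfl fun x _ => ?_
            by_cases hax : a = x <;> by_cases hbx : b = x <;> simp_all <;> ring
        _ = 1 := by
            rw [Finset.sum_add_distrib]
            simp [mul_ite, mul_zero, Finset.sum_ite_eq]
            norm_num }

lemma psd_diag_nonneg {n : Type*} [Fintype n] [DecidableEq n] {M : Matrix n n ℂ}
    (hM : M.PosSemidef) (i : n) : 0 ≤ M i i := by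
  have := hM.dotProduct_mulVec_nonneg (Pi.single i 1)
  simpa [dotProduct, Matrix.mulVec, Pi.single_apply, mul_ite, ite_mul, mul_zero, zero_mul,
    Finset.sum_ite_eq, Finset.sum_ite_eq'] using this

lemma trace_stdBasis_diag {B : Type*} [Fintype B] [DecidableEq B] (j : B) :
    (Matrix.single j j (1:ℂ)).trace = 1 := by
  simp [Matrix.trace, Matrix.diag, Matrix.single, Finset.sum_ite_eq]

lemma kron_conjTranspose {l m n p : Type*} (A : Matrix l m ℂ) (B : Matrix n p ℂ) :
    (A ⊗ₖ B)ᴴ = Aᴴ ⊗ₖ Bᴴ := by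
  ext x y
  simp only [Matrix.conjTranspose_apply, Matrix.kroneckerMap_apply, star_mul', mul_comm]

lemma stdBasis_diag_conjTranspose {B : Type*} [DecidableEq B] (j : B) :
    (Matrix.single j j (1:ℂ))ᴴ = Matrix.single j j (1:ℂ) := by
  ext x y
  simp only [Matrix.conjTranspose_apply, Matrix.single, Matrix.of_apply, apply_ite,
    star_one, star_zero, and_comm]
  split <;> simp_all

lemma kron_diag_posSemidef {Q B : Type*} [Fintype Q] [Fintype B] [DecidableEq B]
    {ρ : Matrix Q Q ℂ} (hρ : ρ.PosSemidef) (j : B) :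
    (ρ ⊗ₖ Matrix.single j j (1:ℂ)).PosSemidef := by
  obtain ⟨C, rfl⟩ := psd_eq_conjTranspose_mul_self hρ
  have : (Cᴴ * C) ⊗ₖ Matrix.single j j (1:ℂ) =
      (C ⊗ₖ Matrix.single j j (1:ℂ))ᴴ * (C ⊗ₖ Matrix.single j j (1:ℂ)) := by
    rw [kron_conjTranspose, stdBasis_diag_conjTranspose, ← Matrix.mul_kronecker_mul,
      Matrix.single_mul_single_same, one_mul]
  rw [this]
  exact Matrix.posSemidef_conjTranspose_mul_self _

lemma psd_sum {n ι : Type*} [Fintype n] (s : Finset ι) (f : ι → Matrix n n ℂ)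
    (h : ∀ i ∈ s, (f i).PosSemidef) : (∑ i ∈ s, f i).PosSemidef := by
  classical
  induction s using Finset.induction_on with
  | empty => simpa using Matrix.PosSemidef.zero
  | insert _ _ hx ih =>
    rw [Finset.sum_insert hx]
    exact (h _ (Finset.mem_insert_self _ _)).add (ih fun i hi => h i (Finset.mem_insert_of_mem hi))

lemma qi_isDensity {Q B : Type*} [Fintype Q] [Fintype B] [DecidableEq B]
    {σ : Matrix (Q × B) (Q × B) ℂ} (h : IsQI σ) : IsDensity σ := by
  obtain ⟨p, ρ, hp, hsum, hρ, rfl⟩ := h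
  constructor
  · exact psd_sum _ _ fun j _ =>
      posSemidef_smul_real (kron_diag_posSemidef (hρ j).1 j) (hp j)
  · rw [Matrix.trace_sum]
    simp only [Matrix.trace_smul, Matrix.trace_kronecker, trace_stdBasis_diag, (hρ _).2,
      smul_eq_mul, mul_one, one_mul]
    rw [← Complex.ofReal_sum, hsum, Complex.ofReal_one]

lemma qi_offdiag {Q B : Type*} [Fintype Q] [Fintype B] [DecidableEq B]
    {σ : Matrix (Q × B) (Q × B) ℂ} (h : IsQI σ) :
    ∀ x y, x.2 ≠ y.2 → σ x y = 0 := by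
  obtain ⟨p, ρ, hp, hsum, hρ, rfl⟩ := h
  intro x y hxy
  simp only [Matrix.sum_apply, Matrix.smul_apply, Matrix.kroneckerMap_apply, smul_eq_mul]
  refine Finset.sum_eq_zero fun j _ => ?_
  have : Matrix.single j j (1:ℂ) x.2 y.2 = 0 := by
    simp only [Matrix.single, Matrix.of_apply, ite_eq_right_iff, and_imp]
    intro h1 h2; exact (hxy (h1.symm.trans h2)).elim
  rw [this, mul_zero, mul_zero]

lemma isQI_of_density_offdiag {Q B : Type*} [Fintype Q] [Fintype B] [DecidableEq Q] [DecidableEq B]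
    {σ : Matrix (Q × B) (Q × B) ℂ} (hσ : IsDensity σ)
    (hoff : ∀ x y, x.2 ≠ y.2 → σ x y = 0)
    (ρ₀ : Matrix Q Q ℂ) (hρ₀ : IsDensity ρ₀) : IsQI σ := by
  classical
  set Blk : B → Matrix Q Q ℂ := fun j => σ.submatrix (fun a => (a, j)) (fun a => (a, j)) with hBlk
  have hBpsd : ∀ j, (Blk j).PosSemidef := fun j => hσ.1.submatrix _
  have hBtr : ∀ j, 0 ≤ (Blk j).trace := by
    intro j
    refine Finset.sum_nonneg fun a _ => psd_diag_nonneg hσ.1 _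
  set p : B → ℝ := fun j => ((Blk j).trace).re with hpdef
  have hptr : ∀ j, ((p j : ℝ) : ℂ) = (Blk j).trace := by
    intro j
    have := hBtr j
    rw [Complex.le_def] at this
    simp at this
    rw [Complex.ext_iff]
    simp [hpdef, this.2.symm]
  have hp : ∀ j, 0 ≤ p j := by
    intro j
    have := hBtr j
    rw [Complex.le_def] at this
    simpa [hpdef] using this.1
  have hsum : ∑ j, p j = 1 := by
    have htr : ∑ j, ((Blk j).trace) = 1 := by
      rw [← hσ.2, Matrix.trace]
      rw [Fintype.sum_prod_type]
      rw [Finset.sum_comm]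
      rfl
    have : ((∑ j, p j : ℝ) : ℂ) = 1 := by
      rw [Complex.ofReal_sum]
      simp_rw [hptr]
      exact htr
    exact_mod_cast this
  refine ⟨p, fun j => if hj : p j = 0 then ρ₀ else ((p j : ℂ))⁻¹ • Blk j, hp, hsum, ?_, ?_⟩
  · intro j
    by_cases hj : p j = 0
    · simpa [hj] using hρ₀
    · simp only [hj, dif_neg, not_false_iff]
      constructor
      · have : ((p j : ℂ))⁻¹ = (((p j)⁻¹ : ℝ) : ℂ) := by push_cast; ring
        rw [this]
        exact posSemidef_smul_real (hBpsd j) (inv_nonneg.mpr (hp j))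
      · rw [Matrix.trace_smul, ← hptr j, smul_eq_mul]
        field_simp
  · ext x y
    rcases x with ⟨a, j'⟩
    rcases y with ⟨b, k'⟩
    simp only [Matrix.sum_apply, Matrix.smul_apply, Matrix.kroneckerMap_apply, smul_eq_mul]
    by_cases hjk : j' = k'
    · subst hjk
      rw [Finset.sum_eq_single j']
      · have hstd : Matrix.single j' j' (1:ℂ) j' j' = 1 := by
          simp [Matrix.single]
        by_cases hj : p j' = 0
        · have hB0 : Blk j' = 0 := by
            apply psd_trace_zero_eq_zero (hBpsd j')
            rw [← hptr j', hj]; simp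
          have : σ (a, j') (b, j') = 0 := by
            have := congrFun (congrFun hB0 a) b
            simpa [hBlk, Matrix.submatrix] using this
          simp [hj, this]
        · simp only [hj, dif_neg, not_false_iff, hstd, mul_one, Matrix.smul_apply, smul_eq_mul]
          rw [← mul_assoc, mul_inv_cancel₀ (by exact_mod_cast hj), one_mul]
          rfl
      · intro c _ hc
        have : Matrix.single c c (1:ℂ) j' j' = 0 := by
          simp [Matrix.single, hc]
        rw [this, mul_zero, mul_zero]
      · simp
    · rw [hoff (a, j') (b, k') hjk]
      symm
      refine Finset.sum_eq_zero fun c _ => ?_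
      have : Matrix.single c c (1:ℂ) j' k' = 0 := by
        simp only [Matrix.single, Matrix.of_apply, ite_eq_right_iff, and_imp]
        intro h1 h2; exact (hjk (h1.symm.trans h2)).elim
      rw [this, mul_zero, mul_zero]

/-- density ⊗ basis diag is QI -/
lemma qi_of_density_kron {Q B : Type*} [Fintype Q] [Fintype B] [DecidableEq B]
    {ρ : Matrix Q Q ℂ} (hρ : IsDensity ρ) (j : B) :
    IsQI (ρ ⊗ₖ Matrix.single j j 1) := by
  refine ⟨fun k => if k = j then 1 else 0, fun _ => ρ, fun k => by positivity,
    by simp [Finset.sum_ite_eq'], fun _ => hρ, ?_⟩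
  rw [Finset.sum_eq_single j]
  · simp
  · intro c _ hc; simp [hc]
  · simp

/-- std basis matrices as combinations of rhoBasis -/
lemma stdBasis_combo (D : ℕ) (a b : Fin D) :
    Matrix.single a b (1:ℂ) =
      if a = b then rhoBasis D a b
      else if (a : ℕ) < b then
        rhoBasis D a b - Complex.I • rhoBasis D b a -
          ((1 - Complex.I)/2) • rhoBasis D a a - ((1 - Complex.I)/2) • rhoBasis D b b
      else
        Complex.I • rhoBasis D a b + rhoBasis D b a -
          ((1 + Complex.I)/2) • rhoBasis D a a - ((1 + Complex.I)/2) • rhoBasis D b b := by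
  split_ifs with h1 h2
  · subst h1; simp [rhoBasis]
  · have hab : a ≠ b := h1
    have hba : b ≠ a := fun h => h1 h.symm
    have h2' : ¬ ((b:ℕ) < a) := by omega
    unfold rhoBasis
    rw [if_neg hab, if_neg hba, if_pos h2, if_neg h2', if_pos rfl, if_pos rfl]
    ext i j
    simp only [Matrix.sub_apply, Matrix.add_apply, Matrix.smul_apply, smul_eq_mul,
      Matrix.single, Matrix.of_apply]
    by_cases hia : a = i <;> by_cases hja : a = j <;> by_cases hib : b = i <;>
      by_cases hjb : b = j <;> simp_all <;> ring_nf <;> simp [Complex.ext_iff] <;> norm_num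
  · have hab : a ≠ b := h1
    have hba : b ≠ a := fun h => h1 h.symm
    have h2' : (b:ℕ) < a := by
      rcases Nat.lt_trichotomy (a:ℕ) (b:ℕ) with h | h | h
      · exact absurd h h2
      · exact absurd (Fin.ext h) hab
      · exact h
    unfold rhoBasis
    rw [if_neg hab, if_neg hba, if_neg h2, if_pos h2', if_pos rfl, if_pos rfl]
    ext i j
    simp only [Matrix.sub_apply, Matrix.add_apply, Matrix.smul_apply, smul_eq_mul,
      Matrix.single, Matrix.of_apply]
    by_cases hia : a = i <;> by_cases hja : a = j <;> by_cases hib : b = i <;>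
      by_cases hjb : b = j <;> simp_all <;> ring_nf <;> simp [Complex.ext_iff] <;> norm_num

lemma cptp_density {n m : Type*} [Fintype n] [Fintype m] [DecidableEq n]
    (E : Matrix n n ℂ →ₗ[ℂ] Matrix m m ℂ) (hE : IsCPTP E) {X : Matrix n n ℂ}
    (hX : IsDensity X) : IsDensity (E X) := by
  constructor
  · have h1 : (X.submatrix (Prod.snd : Fin 1 × n → n) Prod.snd).PosSemidef :=
      hX.1.submatrix _
    have h2 := hE.1 1 _ h1
    have h3 : E X = ((tensId (Fin 1) E) (X.submatrix Prod.snd Prod.snd)).submatrix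
        (fun s => ((0 : Fin 1), s)) (fun s => ((0 : Fin 1), s)) := by
      ext s t
      rfl
    rw [h3]
    exact h2.submatrix _
  · rw [hE.2, hX.2]


/-- a CPTP map `E` on `AB` is QI-preserving iff `E (ρ_{a,b} ⊗ |j⟩⟨j|)` is a
QI state for all `a, b, j`. -/
theorem qip_iff_basis_condition (DA DB : ℕ)
    (E : Matrix (Fin DA × Fin DB) (Fin DA × Fin DB) ℂ →ₗ[ℂ]
      Matrix (Fin DA × Fin DB) (Fin DA × Fin DB) ℂ)
    (hE : IsCPTP E) :
    (∀ σ, IsQI σ → IsQI (E σ)) ↔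
      ∀ (a b : Fin DA) (j : Fin DB),
        IsQI (E (rhoBasis DA a b ⊗ₖ Matrix.single j j 1)) := by
  constructor
  · intro h a b j
    exact h _ (qi_of_density_kron (rhoBasis_isDensity DA a b) j)
  · intro hbasis σ hσ
    have hσ' := hσ
    obtain ⟨p, ρ, hp, hsum, hρ, rfl⟩ := hσ
    have hDB : Nonempty (Fin DB) := by
      by_contra h
      rw [not_nonempty_iff] at h
      rw [Finset.univ_eq_empty, Finset.sum_empty] at hsum
      norm_num at hsum
    obtain ⟨j₀⟩ := hDB
    have hdens : IsDensity (E (∑ j, (p j : ℂ) • (ρ j ⊗ₖ Matrix.single j j 1))) :=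
      cptp_density E hE (qi_isDensity hσ')
    let W : Submodule ℂ (Matrix (Fin DA) (Fin DA) ℂ) :=
      { carrier := {M | ∀ (j : Fin DB) x y, x.2 ≠ y.2 →
          E (M ⊗ₖ Matrix.single j j 1) x y = 0}
        add_mem' := by
          intro M N hM hN j x y hxy
          rw [Matrix.add_kronecker, map_add]
          simp only [Matrix.add_apply]
          rw [hM j x y hxy, hN j x y hxy, add_zero]
        zero_mem' := by
          intro j x y hxy
          rw [Matrix.zero_kronecker, map_zero]
          rfl
        smul_mem' := by
          intro c M hM j x y hxy
          rw [Matrix.smul_kronecker, _root_.map_smul]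
          simp only [Matrix.smul_apply, smul_eq_mul]
          rw [hM j x y hxy, mul_zero] }
    have hrho_mem : ∀ a b, rhoBasis DA a b ∈ W := fun a b j x y hxy =>
      qi_offdiag (hbasis a b j) x y hxy
    have hstd_mem : ∀ a b, Matrix.single a b (1:ℂ) ∈ W := by
      intro a b
      rw [stdBasis_combo DA a b]
      split_ifs
      · exact hrho_mem a b
      · exact W.sub_mem (W.sub_mem (W.sub_mem (hrho_mem a b)
          (W.smul_mem _ (hrho_mem b a))) (W.smul_mem _ (hrho_mem a a)))
          (W.smul_mem _ (hrho_mem b b))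
      · exact W.sub_mem (W.sub_mem (W.add_mem (W.smul_mem _ (hrho_mem a b))
          (hrho_mem b a)) (W.smul_mem _ (hrho_mem a a)))
          (W.smul_mem _ (hrho_mem b b))
    have hall : ∀ M : Matrix (Fin DA) (Fin DA) ℂ, M ∈ W := by
      intro M
      rw [Matrix.matrix_eq_sum_single M]
      refine Submodule.sum_mem _ fun i _ => Submodule.sum_mem _ fun j _ => ?_
      have : Matrix.single i j (M i j) = M i j • Matrix.single i j (1:ℂ) := by
        rw [Matrix.smul_single, smul_eq_mul, mul_one]
      rw [this]
      exact W.smul_mem _ (hstd_mem i j)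
    have hoff : ∀ x y, x.2 ≠ y.2 →
        (E (∑ j, (p j : ℂ) • (ρ j ⊗ₖ Matrix.single j j 1))) x y = 0 := by
      intro x y hxy
      rw [map_sum]
      simp only [Matrix.sum_apply]
      refine Finset.sum_eq_zero fun j _ => ?_
      rw [_root_.map_smul]
      simp only [Matrix.smul_apply, smul_eq_mul]
      rw [hall (ρ j) j x y hxy, mul_zero]
    exact isQI_of_density_offdiag hdens hoff (ρ j₀) (hρ j₀)
end

section
/- There exists a QI-preserving CPTP map that is not a maximally incoherent operation: the map sending every state to the product state |+⟩⟨+|^A ⊗ |0⟩⟨0|^B maps QI states to QI states, but maps the incoherent state |0⟩⟨0|^A ⊗ |0⟩⟨0|^B to a state that is not incoherent on A. Hence QIP ⊄ MIO. -/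
open Matrix Finset
open scoped Kronecker ComplexOrder

/-- `|+⟩⟨+|` on a qubit. -/
noncomputable def plusMat : Matrix (Fin 2) (Fin 2) ℂ := Matrix.of fun _ _ => (1 / 2 : ℂ)

/-- `|0⟩⟨0|` on a qubit. -/
def e00 : Matrix (Fin 2) (Fin 2) ℂ := Matrix.single 0 0 1

/-- The maximally entangled state `|Φ⁺⟩⟨Φ⁺|` on two qubits, `|Φ⁺⟩ = (|00⟩+|11⟩)/√2`. -/
noncomputable def phiMat : Matrix (Fin 2 × Fin 2) (Fin 2 × Fin 2) ℂ :=
  Matrix.of fun p q => if p.1 = p.2 ∧ q.1 = q.2 then (1 / 2 : ℂ) else 0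

/-- The map sending every state to `|+⟩⟨+|^A ⊗ |0⟩⟨0|^B` (as a linear map,
`X ↦ (Tr X) • |+⟩⟨+| ⊗ |0⟩⟨0|`). -/
noncomputable def constMap :
    Matrix (Fin 2 × Fin 2) (Fin 2 × Fin 2) ℂ →ₗ[ℂ]
    Matrix (Fin 2 × Fin 2) (Fin 2 × Fin 2) ℂ where
  toFun X := X.trace • (plusMat ⊗ₖ e00)
  map_add' X Y := by simp [Matrix.trace_add, add_smul]
  map_smul' c X := by simp [Matrix.trace_smul, smul_smul]


section Aux

open scoped MatrixOrder Matrix.Norms.L2Operator in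
lemma Matrix.posSemidef_iff_eq_transpose_mul_self {n : Type*} [Fintype n] [DecidableEq n]
    {A : Matrix n n ℂ} : A.PosSemidef ↔ ∃ B : Matrix n n ℂ, A = Bᴴ * B :=
  ⟨fun h => CStarAlgebra.nonneg_iff_eq_star_mul_self.mp h.nonneg,
    by rintro ⟨B, rfl⟩; exact Matrix.posSemidef_conjTranspose_mul_self B⟩

lemma kron_conjT {l m : Type*} (A : Matrix l l ℂ) (B : Matrix m m ℂ) :
    (A ⊗ₖ B)ᴴ = Aᴴ ⊗ₖ Bᴴ := by
  ext ⟨i, j⟩ ⟨k, l'⟩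
  simp [Matrix.conjTranspose_apply, Matrix.kroneckerMap_apply, _root_.map_mul]

lemma psd_kron {l m : Type*} [Fintype l] [Fintype m] [DecidableEq l] [DecidableEq m]
    {A : Matrix l l ℂ} {B : Matrix m m ℂ} (hA : A.PosSemidef) (hB : B.PosSemidef) :
    (A ⊗ₖ B).PosSemidef := by
  obtain ⟨C, rfl⟩ := Matrix.posSemidef_iff_eq_transpose_mul_self.mp hA
  obtain ⟨D, rfl⟩ := Matrix.posSemidef_iff_eq_transpose_mul_self.mp hB
  rw [show (Cᴴ * C) ⊗ₖ (Dᴴ * D) = (C ⊗ₖ D)ᴴ * (C ⊗ₖ D) by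
    rw [kron_conjT, ← Matrix.mul_kronecker_mul]]
  exact Matrix.posSemidef_conjTranspose_mul_self _

lemma plus_psd : plusMat.PosSemidef := by
  rw [Matrix.posSemidef_iff_eq_transpose_mul_self]
  refine ⟨Matrix.of fun i _ => if i = 0 then (((Real.sqrt 2)⁻¹ : ℝ) : ℂ) else 0, ?_⟩
  ext i j
  simp only [plusMat, Matrix.of_apply, Matrix.mul_apply, Matrix.conjTranspose_apply,
    Fin.sum_univ_two]
  norm_num [Complex.conj_ofReal]
  rw [← mul_inv, ← Complex.ofReal_mul, Real.mul_self_sqrt (by norm_num : (0:ℝ) ≤ 2)]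
  norm_num

lemma plus_trace : plusMat.trace = 1 := by
  simp [plusMat, Matrix.trace, Matrix.diag, Fin.sum_univ_two]

lemma e00_psd : e00.PosSemidef := by
  rw [Matrix.posSemidef_iff_eq_transpose_mul_self]
  refine ⟨e00, ?_⟩
  have h : e00ᴴ = e00 := by
    ext i j
    fin_cases i <;> fin_cases j <;>
      simp [e00, Matrix.conjTranspose_apply, Matrix.single]
  rw [h, e00, Matrix.single_mul_single_same, mul_one]

lemma trace_std {n : Type*} [Fintype n] [DecidableEq n] (j : n) :
    (Matrix.single j j (1 : ℂ)).trace = 1 := by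
  simp [Matrix.trace, Matrix.diag, Matrix.single]

lemma e00_trace : e00.trace = 1 := trace_std 0

lemma pe_psd : (plusMat ⊗ₖ e00).PosSemidef := psd_kron plus_psd e00_psd

lemma pe_trace : (plusMat ⊗ₖ e00).trace = 1 := by
  rw [Matrix.trace_kronecker, plus_trace, e00_trace, mul_one]

/-- The partial trace over the second factor. -/
noncomputable def ptr {k n : Type*} [Fintype n] (X : Matrix (k × n) (k × n) ℂ) :
    Matrix k k ℂ :=
  Matrix.of fun a b => ∑ j, X (a, j) (b, j)

lemma ptr_psd {k n : Type*} [Fintype k] [Fintype n] {X : Matrix (k × n) (k × n) ℂ}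
    (hX : X.PosSemidef) : (ptr X).PosSemidef := by
  have h : ptr X = ∑ j : n, X.submatrix (fun a => (a, j)) (fun b => (b, j)) := by
    ext a b
    simp [ptr, Matrix.sum_apply, Matrix.submatrix_apply]
  rw [h]
  exact Finset.sum_induction _ _ (fun a b ha hb => ha.add hb) Matrix.PosSemidef.zero
    (fun j _ => hX.submatrix _)

lemma tensId_constMap (k : ℕ) (X : Matrix (Fin k × (Fin 2 × Fin 2)) (Fin k × (Fin 2 × Fin 2)) ℂ) :
    tensId (Fin k) constMap X = ptr X ⊗ₖ (plusMat ⊗ₖ e00) := by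
  ext ⟨a, p⟩ ⟨b, q⟩
  show ((Matrix.of fun a' b' => X (a, a') (b, b')).trace • (plusMat ⊗ₖ e00)) p q = _
  simp [ptr, Matrix.trace, Matrix.diag, Matrix.kroneckerMap_apply, Matrix.smul_apply,
    smul_eq_mul]

end Aux

/-- `constMap` is a QI-preserving CPTP map that is not MIO: it maps QI
states to QI states, but maps the incoherent state `|0⟩⟨0| ⊗ |0⟩⟨0|` to a state that is
not incoherent. Hence QIP ⊄ MIO. -/
theorem qip_not_subset_mio :
    IsCPTP constMap ∧ (∀ σ, IsQI σ → IsQI (constMap σ)) ∧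
      IsIncoherent (e00 ⊗ₖ e00) ∧ ¬ IsIncoherent (constMap (e00 ⊗ₖ e00)) ∧
      ¬ (∀ σ, IsIncoherent σ → IsIncoherent (constMap σ)) := by
  have hcp : IsCPTP constMap := by
    constructor
    · intro k X hX
      rw [tensId_constMap]
      exact psd_kron (ptr_psd hX) pe_psd
    · intro X
      show (X.trace • (plusMat ⊗ₖ e00)).trace = X.trace
      rw [Matrix.trace_smul, pe_trace, smul_eq_mul, mul_one]
  have hinc : IsIncoherent (e00 ⊗ₖ e00) := by
    refine ⟨⟨psd_kron e00_psd e00_psd, by rw [Matrix.trace_kronecker, e00_trace, mul_one]⟩, ?_⟩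
    rintro ⟨x1, x2⟩ ⟨y1, y2⟩ hxy
    have hx : (e00 ⊗ₖ e00) (x1, x2) (y1, y2) =
        (if (0:Fin 2) = x1 ∧ (0:Fin 2) = y1 then 1 else 0) *
        (if (0:Fin 2) = x2 ∧ (0:Fin 2) = y2 then 1 else 0) := rfl
    rw [hx]
    split_ifs with h1 h2
    · exact absurd (Prod.ext (h1.1.symm.trans h1.2) (h2.1.symm.trans h2.2)) hxy
    all_goals simp
  have hentry : constMap (e00 ⊗ₖ e00) ((0:Fin 2), (0:Fin 2)) ((1:Fin 2), (0:Fin 2)) = 1/2 := by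
    show ((e00 ⊗ₖ e00).trace • (plusMat ⊗ₖ e00)) (0, 0) (1, 0) = 1/2
    rw [Matrix.trace_kronecker, e00_trace, mul_one, one_smul]
    show plusMat 0 1 * e00 0 0 = 1/2
    simp [plusMat, e00, Matrix.single]
  have hnot : ¬ IsIncoherent (constMap (e00 ⊗ₖ e00)) := by
    intro h
    have h2 := h.2 ((0:Fin 2), (0:Fin 2)) ((1:Fin 2), (0:Fin 2)) (by decide)
    rw [hentry] at h2
    norm_num at h2
  refine ⟨hcp, ?_, hinc, hnot, fun hall => hnot (hall _ hinc)⟩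
  rintro σ ⟨p, ρ, hp, hsum, hd, rfl⟩
  have ht : (∑ j, (p j : ℂ) • (ρ j ⊗ₖ Matrix.single j j 1)).trace = 1 := by
    rw [Matrix.trace_sum]
    have : ∀ j ∈ Finset.univ, ((p j : ℂ) • (ρ j ⊗ₖ Matrix.single j j (1:ℂ))).trace
        = (p j : ℂ) := by
      intro j _
      rw [Matrix.trace_smul, Matrix.trace_kronecker, (hd j).2, trace_std, mul_one, smul_eq_mul,
        mul_one]
    rw [Finset.sum_congr rfl this, ← Complex.ofReal_sum, hsum, Complex.ofReal_one]
  have hc : constMap (∑ j, (p j : ℂ) • (ρ j ⊗ₖ Matrix.single j j 1))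
      = plusMat ⊗ₖ e00 := by
    show (∑ j, (p j : ℂ) • (ρ j ⊗ₖ Matrix.single j j 1)).trace • (plusMat ⊗ₖ e00)
      = plusMat ⊗ₖ e00
    rw [ht, one_smul]
  rw [hc]
  refine ⟨fun j => if j = 0 then 1 else 0, fun _ => plusMat, ?_, ?_, ?_, ?_⟩
  · intro j; by_cases h : j = 0 <;> simp [h]
  · simp [Fin.sum_univ_two]
  · exact fun _ => ⟨plus_psd, plus_trace⟩
  · rw [Fin.sum_univ_two]
    norm_num [e00]
end

section
/- The CPTP map E on ℂ²⊗ℂ² with Kraus operators K₀ = |0⟩⟨0|⊗|0⟩⟨0| + |1⟩⟨1|⊗|1⟩⟨0| and K₁ = |0⟩⟨0|⊗|0⟩⟨1| + |1⟩⟨1|⊗|1⟩⟨1| is a valid CPTP map (K₀†K₀ + K₁†K₁ = I), maps every incoherent state on AB to an incoherent state, and satisfies E(|+⟩⟨+| ⊗ |0⟩⟨0|) = |Φ⁺⟩⟨Φ⁺| where |Φ⁺⟩ = (|00⟩+|11⟩)/√2; in particular E is MIO but not QI-preserving, so MIO ⊄ QIP. -/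
open Matrix Finset
open scoped Kronecker ComplexOrder

/-- Kraus operator `K₀ = |0⟩⟨0| ⊗ |0⟩⟨0| + |1⟩⟨1| ⊗ |1⟩⟨0|`. -/
noncomputable def krausK0 : Matrix (Fin 2 × Fin 2) (Fin 2 × Fin 2) ℂ :=
  Matrix.single 0 0 1 ⊗ₖ Matrix.single 0 0 1 +
    Matrix.single 1 1 1 ⊗ₖ Matrix.single 1 0 1

/-- Kraus operator `K₁ = |0⟩⟨0| ⊗ |0⟩⟨1| + |1⟩⟨1| ⊗ |1⟩⟨1|`. -/
noncomputable def krausK1 : Matrix (Fin 2 × Fin 2) (Fin 2 × Fin 2) ℂ :=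
  Matrix.single 0 0 1 ⊗ₖ Matrix.single 0 1 1 +
    Matrix.single 1 1 1 ⊗ₖ Matrix.single 1 1 1

/-- The CPTP map with Kraus operators `K₀, K₁`. -/
noncomputable def ioMap :
    Matrix (Fin 2 × Fin 2) (Fin 2 × Fin 2) ℂ →ₗ[ℂ]
    Matrix (Fin 2 × Fin 2) (Fin 2 × Fin 2) ℂ where
  toFun X := krausK0 * X * krausK0ᴴ + krausK1 * X * krausK1ᴴ
  map_add' X Y := by
    simp only [Matrix.mul_add, Matrix.add_mul]
    abel
  map_smul' c X := by
    simp [Matrix.mul_smul, Matrix.smul_mul]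


lemma kraus_complete : krausK0ᴴ * krausK0 + krausK1ᴴ * krausK1 = 1 := by
  ext ⟨a,b⟩ ⟨c,d⟩
  fin_cases a <;> fin_cases b <;> fin_cases c <;> fin_cases d <;>
    simp [krausK0, krausK1, Matrix.mul_apply, Fintype.sum_prod_type, Fin.sum_univ_two,
      Matrix.one_apply, Matrix.single, Matrix.conjTranspose_apply, Prod.ext_iff]

lemma tensId_ioMap (k : ℕ) (X : Matrix (Fin k × (Fin 2 × Fin 2)) (Fin k × (Fin 2 × Fin 2)) ℂ) :
    tensId (Fin k) ioMap X =
      ((1 : Matrix (Fin k) (Fin k) ℂ) ⊗ₖ krausK0) * X *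
        ((1 : Matrix (Fin k) (Fin k) ℂ) ⊗ₖ krausK0)ᴴ +
      ((1 : Matrix (Fin k) (Fin k) ℂ) ⊗ₖ krausK1) * X *
        ((1 : Matrix (Fin k) (Fin k) ℂ) ⊗ₖ krausK1)ᴴ := by
  ext ⟨a,s⟩ ⟨b,t⟩
  have hL : (tensId (Fin k) ioMap X) (a,s) (b,t) =
      (krausK0 * (Matrix.of fun u v => X (a,u) (b,v)) * krausK0ᴴ +
       krausK1 * (Matrix.of fun u v => X (a,u) (b,v)) * krausK1ᴴ) s t := rfl
  rw [hL]
  simp only [Matrix.add_apply, Matrix.mul_apply, Matrix.conjTranspose_apply,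
    Matrix.kroneckerMap_apply, Matrix.one_apply, Fintype.sum_prod_type, Matrix.of_apply,
    ite_mul, mul_ite, zero_mul, mul_zero, apply_ite (star : ℂ → ℂ), star_zero,
    Finset.sum_ite_irrel, Finset.sum_const_zero,
    Finset.sum_ite_eq, Finset.sum_ite_eq', Finset.mem_univ, if_true, one_mul]

lemma kraus_offdiag (p q x : Fin 2 × Fin 2) (hpq : p ≠ q) :
    krausK0 p x * star (krausK0 q x) = 0 ∧ krausK1 p x * star (krausK1 q x) = 0 := by
  revert hpq
  obtain ⟨p1,p2⟩ := p; obtain ⟨q1,q2⟩ := q; obtain ⟨x1,x2⟩ := x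
  fin_cases p1 <;> fin_cases p2 <;> fin_cases q1 <;> fin_cases q2 <;>
    fin_cases x1 <;> fin_cases x2 <;>
    simp [krausK0, krausK1, Matrix.single, Prod.ext_iff]

lemma plusMat_psd : (plusMat).PosSemidef := by
  rw [Matrix.posSemidef_iff_dotProduct_mulVec]
  constructor
  · ext i j; simp [plusMat, Matrix.conjTranspose_apply]
  · intro x
    have hx : star x ⬝ᵥ plusMat *ᵥ x
        = (1/2 : ℂ) * (star (x 0 + x 1) * (x 0 + x 1)) := by
      simp [dotProduct, Matrix.mulVec, plusMat, Fin.sum_univ_two]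
      ring
    rw [hx]
    exact mul_nonneg (by rw [Complex.le_def]; norm_num) (star_mul_self_nonneg _)

lemma ioMap_tp (X : Matrix (Fin 2 × Fin 2) (Fin 2 × Fin 2) ℂ) : (ioMap X).trace = X.trace := by
  have h : ioMap X = krausK0 * X * krausK0ᴴ + krausK1 * X * krausK1ᴴ := rfl
  rw [h, Matrix.trace_add, Matrix.trace_mul_cycle krausK0 X krausK0ᴴ,
    Matrix.trace_mul_cycle krausK1 X krausK1ᴴ,
    ← Matrix.trace_add, ← Matrix.add_mul, kraus_complete, Matrix.one_mul]

set_option maxHeartbeats 1000000 in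
lemma ioMap_plus : ioMap (plusMat ⊗ₖ e00) = phiMat := by
  have h : ioMap (plusMat ⊗ₖ e00) =
      krausK0 * (plusMat ⊗ₖ e00) * krausK0ᴴ + krausK1 * (plusMat ⊗ₖ e00) * krausK1ᴴ := rfl
  rw [h]
  ext ⟨a,b⟩ ⟨c,d⟩
  fin_cases a <;> fin_cases b <;> fin_cases c <;> fin_cases d <;>
    simp [krausK0, krausK1, plusMat, e00, phiMat, Matrix.mul_apply, Fintype.sum_prod_type,
      Fin.sum_univ_two, Matrix.single, Matrix.kroneckerMap_apply,
      Matrix.conjTranspose_apply, Prod.ext_iff]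

lemma phi_not_qi : ¬ IsQI phiMat := by
  rintro ⟨p, ρ, _, _, _, hσ⟩
  have h := congr_fun (congr_fun hσ ((0 : Fin 2), (0 : Fin 2))) ((1 : Fin 2), (1 : Fin 2))
  simp [phiMat, Matrix.sum_apply, Matrix.kroneckerMap_apply, Matrix.single,
    Fin.sum_univ_two] at h

set_option maxHeartbeats 1000000 in
lemma plus_qi : IsQI (plusMat ⊗ₖ e00) := by
  refine ⟨fun j => if j = 0 then 1 else 0, fun _ => plusMat, ?_, ?_, ?_, ?_⟩
  · intro j; by_cases hj : j = 0 <;> simp [hj]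
  · simp [Fin.sum_univ_two]
  · intro j
    refine ⟨plusMat_psd, ?_⟩
    norm_num [Matrix.trace, Matrix.diag, plusMat, Fin.sum_univ_two]
  · rw [Fin.sum_univ_two]
    norm_num [e00]

/-- `ioMap` is a valid CPTP map (`K₀†K₀ + K₁†K₁ = I`), maps every
incoherent state to an incoherent state (MIO), and maps `|+⟩⟨+| ⊗ |0⟩⟨0|` to the
maximally entangled state `|Φ⁺⟩⟨Φ⁺|`, which is not QI; hence `ioMap` is MIO but not
QI-preserving, so MIO ⊄ QIP. -/
theorem mio_not_subset_qip :
    krausK0ᴴ * krausK0 + krausK1ᴴ * krausK1 = 1 ∧ IsCPTP ioMap ∧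
      (∀ σ, IsIncoherent σ → IsIncoherent (ioMap σ)) ∧
      ioMap (plusMat ⊗ₖ e00) = phiMat ∧ ¬ IsQI phiMat ∧
      ¬ (∀ σ, IsQI σ → IsQI (ioMap σ)) := by
  refine ⟨kraus_complete, ⟨?_, ioMap_tp⟩, ?_, ?_, ?_, ?_⟩
  · -- complete positivity
    intro k X hX
    rw [tensId_ioMap]
    exact (hX.mul_mul_conjTranspose_same _).add (hX.mul_mul_conjTranspose_same _)
  · -- MIO
    rintro σ ⟨⟨hpsd, htr⟩, hdiag⟩
    refine ⟨⟨?_, ?_⟩, ?_⟩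
    · exact (hpsd.mul_mul_conjTranspose_same krausK0).add (hpsd.mul_mul_conjTranspose_same krausK1)
    · rw [ioMap_tp, htr]
    · intro p q hpq
      have h : ioMap σ p q = (krausK0 * σ * krausK0ᴴ + krausK1 * σ * krausK1ᴴ) p q := rfl
      rw [h]
      simp only [Matrix.add_apply, Matrix.mul_apply, Matrix.conjTranspose_apply]
      have h0 : ∀ K : Matrix (Fin 2 × Fin 2) (Fin 2 × Fin 2) ℂ,
          (∀ x : Fin 2 × Fin 2, K p x * star (K q x) = 0) →
          ∑ y, (∑ x, K p x * σ x y) * star (K q y) = 0 := by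
        intro K hK
        refine Finset.sum_eq_zero fun y _ => ?_
        rw [Finset.sum_mul]
        refine Finset.sum_eq_zero fun x _ => ?_
        by_cases hxy : x = y
        · subst hxy
          have : K p x * σ x x * star (K q x) = K p x * star (K q x) * σ x x := by ring
          rw [this, hK x, zero_mul]
        · rw [hdiag x y hxy, mul_zero, zero_mul]
      rw [h0 krausK0 (fun x => (kraus_offdiag p q x hpq).1),
        h0 krausK1 (fun x => (kraus_offdiag p q x hpq).2), add_zero]
  · exact ioMap_plus
  · exact phi_not_qi
  · -- not QI-preserving
    intro h
    have h2 := h _ plus_qi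
    rw [ioMap_plus] at h2
    exact phi_not_qi h2
end

section
/- The SWAP unitary channel on ℂ^d ⊗ ℂ^d maps every incoherent state to an incoherent state (it is MIO), but for d ≥ 2 it is not a PPT operation: the partial transpose (on the input-A and output-A systems) of the Choi operator of SWAP is not positive semidefinite. Hence (MIO ∩ PPT) ⊊ MIO. -/
open Matrix Finset
open scoped Kronecker ComplexOrder

/-- The SWAP unitary channel `ρ ↦ U ρ U†` on `ℂ^d ⊗ ℂ^d`. -/
def swapMap (d : ℕ) :
    Matrix (Fin d × Fin d) (Fin d × Fin d) ℂ →ₗ[ℂ] Matrix (Fin d × Fin d) (Fin d × Fin d) ℂ where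
  toFun X := Matrix.of fun p q => X (p.2, p.1) (q.2, q.1)
  map_add' X Y := rfl
  map_smul' c X := rfl

/-- The Choi operator of a bipartite map, indexed by (output, input). -/
def choiOf (dA dB : ℕ)
    (E : Matrix (Fin dA × Fin dB) (Fin dA × Fin dB) ℂ →ₗ[ℂ]
      Matrix (Fin dA × Fin dB) (Fin dA × Fin dB) ℂ) :
    Matrix ((Fin dA × Fin dB) × (Fin dA × Fin dB)) ((Fin dA × Fin dB) × (Fin dA × Fin dB)) ℂ :=
  Matrix.of fun p q => E (Matrix.single p.2 q.2 1) p.1 q.1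

/-- Partial transpose of the Choi operator on the `A` systems (output-A and input-A). -/
def choiPTA (dA dB : ℕ)
    (E : Matrix (Fin dA × Fin dB) (Fin dA × Fin dB) ℂ →ₗ[ℂ]
      Matrix (Fin dA × Fin dB) (Fin dA × Fin dB) ℂ) :
    Matrix ((Fin dA × Fin dB) × (Fin dA × Fin dB)) ((Fin dA × Fin dB) × (Fin dA × Fin dB)) ℂ :=
  Matrix.of fun p q =>
    choiOf dA dB E ((q.1.1, p.1.2), (q.2.1, p.2.2)) ((p.1.1, q.1.2), (p.2.1, q.2.2))

private lemma sum_two {α : Type*} [Fintype α] [DecidableEq α] (f : α → ℂ) (x y : α)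
    (hxy : x ≠ y) :
    ∑ q, f q * (if q = x then (1:ℂ) else if q = y then -1 else 0) = f x - f y := by
  have h : ∀ q, f q * (if q = x then (1:ℂ) else if q = y then -1 else 0) =
      (if q = x then f q else 0) + (if q = y then -(f q) else 0) := by
    intro q
    by_cases h1 : q = x <;> by_cases h2 : q = y <;>
      simp_all [hxy]
  simp only [h, Finset.sum_add_distrib, Finset.sum_ite_eq', Finset.mem_univ, if_true]
  ring

/-- the SWAP channel on `ℂ^d ⊗ ℂ^d` maps every incoherent state to an
incoherent state (MIO), but for `d ≥ 2` the partial transpose (on the `A` systems) of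
its Choi operator is not positive semidefinite, so SWAP is not PPT.
Hence (MIO ∩ PPT) ⊊ MIO. -/
theorem swap_mio_not_ppt (d : ℕ) :
    (∀ σ, IsIncoherent σ → IsIncoherent (swapMap d σ)) ∧
      (2 ≤ d → ¬ (choiPTA d d (swapMap d)).PosSemidef) := by
  constructor
  · rintro σ ⟨⟨hpsd, htr⟩, hdiag⟩
    have heq : swapMap d σ = σ.submatrix Prod.swap Prod.swap := rfl
    refine ⟨⟨?_, ?_⟩, ?_⟩
    · rw [heq]; exact hpsd.submatrix _
    · rw [heq, ← htr]
      simp only [Matrix.trace, Matrix.diag, Matrix.submatrix_apply]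
      exact Equiv.sum_comp (Equiv.prodComm (Fin d) (Fin d)) (fun p => σ p p)
    · intro x y hxy
      rw [heq]
      exact hdiag _ _ (fun h => hxy (Prod.swap_injective h))
  · intro hd hpsd
    set i0 : Fin d := ⟨0, by omega⟩
    set i1 : Fin d := ⟨1, by omega⟩
    have h01 : i0 ≠ i1 := by simp [i0, i1, Fin.ext_iff]
    set x : (Fin d × Fin d) × (Fin d × Fin d) := ((i0, i0), (i1, i1))
    set y : (Fin d × Fin d) × (Fin d × Fin d) := ((i1, i1), (i0, i0))
    have hxy : x ≠ y := by
      simp [x, y, Prod.ext_iff, h01]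
    set M := choiPTA d d (swapMap d)
    set v : (Fin d × Fin d) × (Fin d × Fin d) → ℂ :=
      fun p => if p = x then 1 else if p = y then -1 else 0
    have hM : ∀ p q, M p q =
        Matrix.single (q.2.1, p.2.2) (p.2.1, q.2.2) (1:ℂ)
          (p.1.2, q.1.1) (q.1.2, p.1.1) := fun p q => rfl
    have hxx : M x x = 0 := by
      rw [hM]
      simp [x, Matrix.single, Prod.ext_iff, h01, h01.symm]
    have hyy : M y y = 0 := by
      rw [hM]
      simp [y, Matrix.single, Prod.ext_iff, h01, h01.symm]
    have hxy1 : M x y = 1 := by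
      rw [hM]
      simp [x, y, Matrix.single]
    have hyx1 : M y x = 1 := by
      rw [hM]
      simp [x, y, Matrix.single]
    have hmv : ∀ p, (M *ᵥ v) p = M p x - M p y := by
      intro p
      exact sum_two (M p) x y hxy
    have hdot : star v ⬝ᵥ (M *ᵥ v) = -2 := by
      have : star v ⬝ᵥ (M *ᵥ v) = ∑ p, (M *ᵥ v) p * v p := by
        simp only [dotProduct, Pi.star_apply]
        refine Finset.sum_congr rfl fun p _ => ?_
        have : star (v p) = v p := by
          by_cases h1 : p = x <;> by_cases h2 : p = y <;> simp [v, h1, h2, hxy, Ne.symm hxy]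
        rw [this, mul_comm]
      rw [this, sum_two (M *ᵥ v) x y hxy, hmv, hmv, hxx, hyy, hxy1, hyx1]
      ring
    have := hpsd.dotProduct_mulVec_nonneg v
    rw [hdot] at this
    have : (0:ℝ) ≤ -2 := by
      simpa [Complex.le_def] using this
    linarith
end
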